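/- Let X be a nonempty proper metric space (all closed balls compact), Y a metric space, and P : X → Y a submetry. Then P also maps closed balls onto closed balls of the same radius: for every x ∈ X and every real r ≥ 0, P '' (Metric.closedBall x r) = Metric.closedBall (P x) r. -/
import Mathlib


/-- A map `P : X → Y` between metric spaces is a submetry if it maps every open
ball onto the open ball of the same radius around the image of the center. -/
def IsSubmetry {X Y : Type*} [MetricSpace X] [MetricSpace Y] (P : X → Y) : Prop :=
  ∀ (x : X) (r : ℝ), 0 < r → P '' Metric.ball x r = Metric.ball (P x) r

theorem IsSubmetry.lipschitz {X Y : Type*} [MetricSpace X] [MetricSpace Y] (P : X → Y)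
    (hP : IsSubmetry P) : LipschitzWith 1 P := by
  rw [lipschitzWith_iff_dist_le_mul]
  intro a b
  simp only [NNReal.coe_one, one_mul]
  refine le_of_forall_pos_lt_add fun ε hε => ?_
  have hb : b ∈ Metric.ball a (dist a b + ε) := by
    simp [Metric.mem_ball, dist_comm b a]; linarith
  have := hP a (dist a b + ε) (by positivity)
  have : P b ∈ Metric.ball (P a) (dist a b + ε) := this ▸ ⟨b, hb, rfl⟩
  simpa [Metric.mem_ball, dist_comm (P a) (P b)] using this

/-- A submetry from a proper metric space maps closed balls onto closed balls of
the same radius. -/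
theorem submetry_image_closedBall {X Y : Type*} [MetricSpace X] [MetricSpace Y]
    [Nonempty X] [ProperSpace X] (P : X → Y) (hP : IsSubmetry P) :
    ∀ (x : X) (r : ℝ), 0 ≤ r →
      P '' Metric.closedBall x r = Metric.closedBall (P x) r := by
  intro x r hr
  have hlip := hP.lipschitz
  apply Set.Subset.antisymm
  · rintro _ ⟨x', hx', rfl⟩
    rw [Metric.mem_closedBall] at hx' ⊢
    calc dist (P x') (P x) ≤ 1 * dist x' x := by
          simpa using (lipschitzWith_iff_dist_le_mul.mp hlip x' x)
      _ ≤ r := by linarith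
  · intro y hy
    rw [Metric.mem_closedBall] at hy
    -- choose xₙ with P xₙ = y and dist xₙ x < r + 1/(n+1)
    have hchoice : ∀ n : ℕ, ∃ x' : X, dist x' x < r + 1 / (n + 1) ∧ P x' = y := by
      intro n
      have hpos : (0:ℝ) < r + 1 / (n + 1) := by positivity
      have hy' : y ∈ Metric.ball (P x) (r + 1 / (n + 1)) := by
        rw [Metric.mem_ball]
        have : (0:ℝ) < 1 / (n + 1) := by positivity
        linarith
      rw [← hP x _ hpos] at hy'
      obtain ⟨x', hx', hPx'⟩ := hy'
      exact ⟨x', by simpa [Metric.mem_ball] using hx', hPx'⟩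
    choose u hu hPu using hchoice
    have hub : ∀ n, u n ∈ Metric.closedBall x (r + 1) := by
      intro n
      rw [Metric.mem_closedBall]
      have h1 : (1:ℝ) / (n + 1) ≤ 1 := by
        rw [div_le_one (by positivity)]
        have : (0:ℝ) ≤ n := Nat.cast_nonneg n
        linarith
      have := (hu n).le
      linarith
    have hcpt : IsCompact (Metric.closedBall x (r + 1)) := isCompact_closedBall x (r + 1)
    obtain ⟨x', hx'mem, φ, hφmono, hφlim⟩ := hcpt.tendsto_subseq hub
    refine ⟨x', ?_, ?_⟩
    · rw [Metric.mem_closedBall]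
      have hdist : Filter.Tendsto (fun n => dist (u (φ n)) x) Filter.atTop
          (nhds (dist x' x)) := (Continuous.dist continuous_id continuous_const).continuousAt.tendsto.comp hφlim
      refine le_of_forall_pos_le_add fun ε hε => ?_
      refine le_of_tendsto hdist ?_
      obtain ⟨N, hN⟩ := exists_nat_gt (1 / ε)
      filter_upwards [Filter.eventually_ge_atTop N] with n hn
      have hφn : N ≤ φ n := le_trans hn hφmono.le_apply
      have h2 : (1:ℝ) / (φ n + 1) ≤ ε := by
        rw [div_le_iff₀ (by positivity)]
        have h3 : (N:ℝ) ≤ φ n := by exact_mod_cast hφn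
        have h4 : 1 / ε < N := hN
        have h5 : 1 < ε * N := by
          rw [div_lt_iff₀ hε] at h4; linarith [mul_comm ε (N:ℝ)]
        nlinarith
      have := (hu (φ n)).le
      linarith
    · have : Filter.Tendsto (fun n => P (u (φ n))) Filter.atTop (nhds (P x')) :=
        (hlip.continuous.continuousAt.tendsto).comp hφlim
      simp only [hPu] at this
      exact tendsto_nhds_unique this tendsto_const_nhds
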